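/- Let {(X_n, M_n, ∗)}_{n∈ℕ} be a sequence of nonempty compact non-Archimedean fuzzy metric spaces (with the same continuous t-norm ∗) satisfying: (1) ∗ satisfies property (TN1): a − a∗b ≥ a∗(1−b) for all a,b ∈ [0,1]; (2) there exists a nondecreasing left-continuous function C : (0,∞) → (0,1] with 0 < C(s) ≤ diam_s(X_n) for all s > 0 and all n; (3) for every t > 0 and 0 < ε < 1 there exists N(ε,t) ∈ ℕ with cov(X_n,ε,t) ≤ N(ε,t) for all n; (4) for every t > 0 and 0 < ε < 1, with N = N(ε,t), there exists for each n a (t,ε)-net {x_i^n}_{i=1}^N in X_n such that for every n,m ∈ ℕ, all s > t and all i,j ∈ {1,…,N}, if M_n(x_i^n,x_j^n,s) < M_m(x_i^m,x_j^m,s) then M_n(x_i^n,x_j^n,s)/(M_m(x_i^m,x_j^m,s) ∗ (1−ε)) ≥ M_n(x_i^n,x_j^n,t)/(M_m(x_i^m,x_j^m,t) ∗ (1−ε)). Then for every t > 0 and 0 < ε < 1 there exists a subsequence {X_{n_k}}_{k∈ℕ} such that M_GH(X_{n_j}, X_{n_k}, t) > (1−ε) ∗ (1−ε) for all j,k ∈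 ℕ. -/

import Mathlib

open Set

/-- A continuous t-norm on `[0,1]`. -/
structure IsContinuousTNorm (star : ℝ → ℝ → ℝ) : Prop where
  mem : ∀ a ∈ Icc (0:ℝ) 1, ∀ b ∈ Icc (0:ℝ) 1, star a b ∈ Icc (0:ℝ) 1
  comm : ∀ a ∈ Icc (0:ℝ) 1, ∀ b ∈ Icc (0:ℝ) 1, star a b = star b a
  assoc : ∀ a ∈ Icc (0:ℝ) 1, ∀ b ∈ Icc (0:ℝ) 1, ∀ c ∈ Icc (0:ℝ) 1,
    star (star a b) c = star a (star b c)
  one : ∀ a ∈ Icc (0:ℝ) 1, star a 1 = a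
  mono : ∀ a b c d : ℝ, a ∈ Icc (0:ℝ) 1 → b ∈ Icc (0:ℝ) 1 → c ∈ Icc (0:ℝ) 1 →
    d ∈ Icc (0:ℝ) 1 → a ≤ c → b ≤ d → star a b ≤ star c d
  continuous : ContinuousOn (fun p : ℝ × ℝ => star p.1 p.2) (Icc 0 1 ×ˢ Icc 0 1)

/-- A fuzzy metric in the sense of Kramosil and Michalek: `M x y t` is the degree of
nearness of `x` and `y` at time `t ≥ 0`. -/
structure IsFuzzyMetric {X : Type*} (star : ℝ → ℝ → ℝ) (M : X → X → ℝ → ℝ) : Prop where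
  range : ∀ x y t, 0 ≤ t → M x y t ∈ Icc (0:ℝ) 1
  km1 : ∀ x y, M x y 0 = 0
  km2 : ∀ x y, (∀ t, 0 < t → M x y t = 1) ↔ x = y
  km3 : ∀ x y t, M x y t = M y x t
  km4 : ∀ x y z t s, 0 < t → 0 < s → star (M x y t) (M y z s) ≤ M x z (t + s)
  km5 : ∀ x y t, 0 < t → ContinuousWithinAt (M x y) (Iio t) t

/-- A non-Archimedean fuzzy metric: (KM4) is replaced by the stronger (NA). -/
structure IsNAFuzzyMetric {X : Type*} (star : ℝ → ℝ → ℝ) (M : X → X → ℝ → ℝ) : Prop where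
  range : ∀ x y t, 0 ≤ t → M x y t ∈ Icc (0:ℝ) 1
  km1 : ∀ x y, M x y 0 = 0
  km2 : ∀ x y, (∀ t, 0 < t → M x y t = 1) ↔ x = y
  km3 : ∀ x y t, M x y t = M y x t
  na : ∀ x y z t s, 0 < t → 0 < s → star (M x y t) (M y z s) ≤ M x z (max t s)
  km5 : ∀ x y t, 0 < t → ContinuousWithinAt (M x y) (Iio t) t

/-- The open ball `B_M(x, ε, t)`. -/
def fuzzyBall {X : Type*} (M : X → X → ℝ → ℝ) (x : X) (ε t : ℝ) : Set X :=
  {y | 1 - ε < M x y t}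

/-- The topology on `X` is the one induced by the fuzzy metric `M`, i.e. the open balls
form a neighbourhood basis at every point. -/
def FuzzyCompatible {X : Type*} [TopologicalSpace X] (M : X → X → ℝ → ℝ) : Prop :=
  ∀ x : X, (nhds x).HasBasis (fun p : ℝ × ℝ => 0 < p.1 ∧ p.1 < 1 ∧ 0 < p.2)
    (fun p => fuzzyBall M x p.1 p.2)

/-- The Hausdorff fuzzy distance between two subsets of a fuzzy metric space. -/
noncomputable def fuzzyHSet {X : Type*} (M : X → X → ℝ → ℝ) (A B : Set X) (t : ℝ) : ℝ :=
  min (⨅ a : A, ⨆ b : B, M a b t) (⨅ b : B, ⨆ a : A, M a b t)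

/-- The Hausdorff fuzzy distance between the two parts of a disjoint union `X ⊕ Y`. -/
noncomputable def fuzzyH {X Y : Type*} (M : (X ⊕ Y) → (X ⊕ Y) → ℝ → ℝ) (t : ℝ) : ℝ :=
  min (⨅ x : X, ⨆ y : Y, M (Sum.inl x) (Sum.inr y) t)
    (⨅ y : Y, ⨆ x : X, M (Sum.inl x) (Sum.inr y) t)

/-- A non-Archimedean fuzzy metric on the disjoint union `X ⊕ Y` is admissible if it
restricts to the given fuzzy metrics on `X` and on `Y`. -/
def IsAdmissible {X Y : Type*} (star : ℝ → ℝ → ℝ) (MX : X → X → ℝ → ℝ)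
    (MY : Y → Y → ℝ → ℝ) (M : (X ⊕ Y) → (X ⊕ Y) → ℝ → ℝ) : Prop :=
  IsNAFuzzyMetric star M ∧
    (∀ x x' t, 0 ≤ t → M (Sum.inl x) (Sum.inl x') t = MX x x' t) ∧
    (∀ y y' t, 0 ≤ t → M (Sum.inr y) (Sum.inr y') t = MY y y' t)

/-- The non-Archimedean Gromov-Hausdorff fuzzy distance. -/
noncomputable def MGH {X Y : Type*} (star : ℝ → ℝ → ℝ) (MX : X → X → ℝ → ℝ)
    (MY : Y → Y → ℝ → ℝ) (t : ℝ) : ℝ :=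
  sSup ((fun M => fuzzyH M t) '' {M | IsAdmissible star MX MY M})

/-- The `t`-diameter of a fuzzy metric space. -/
noncomputable def fuzzyDiam {X : Type*} (M : X → X → ℝ → ℝ) (s : ℝ) : ℝ :=
  ⨅ p : X × X, M p.1 p.2 s

/-- `cov(X, ε, t) ≤ N` : `X` can be covered by at most `N` balls `B(c, ε, t)`. -/
def CovLE {X : Type*} (M : X → X → ℝ → ℝ) (ε t : ℝ) (N : ℕ) : Prop :=
  ∃ C : Finset X, C.card ≤ N ∧ ∀ x : X, ∃ c ∈ C, 1 - ε < M c x t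

/-- Property (TN1) of a t-norm: `a - a ∗ b ≥ a ∗ (1 - b)`. -/
def TN1 (star : ℝ → ℝ → ℝ) : Prop :=
  ∀ a ∈ Icc (0:ℝ) 1, ∀ b ∈ Icc (0:ℝ) 1, star a (1 - b) ≤ a - star a b

/-- The standard fuzzy metric associated to a metric space. -/
noncomputable def stdFuzzy {X : Type*} [MetricSpace X] (x y : X) (t : ℝ) : ℝ :=
  if 0 < t then t / (t + dist x y) else 0

universe u

namespace TNormAux

variable {star : ℝ → ℝ → ℝ}

local notation "I01" => Icc (0:ℝ) 1

lemma one_mem : (1:ℝ) ∈ I01 := by constructor <;> norm_num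
lemma zero_mem : (0:ℝ) ∈ I01 := by constructor <;> norm_num

section Basic
variable (hs : IsContinuousTNorm star)
include hs

lemma star_mem {a b : ℝ} (ha : a ∈ I01) (hb : b ∈ I01) : star a b ∈ I01 :=
  hs.mem a ha b hb

lemma one_star {a : ℝ} (ha : a ∈ I01) : star 1 a = a := by
  rw [hs.comm 1 one_mem a ha]; exact hs.one a ha

lemma star_le_fst {a b : ℝ} (ha : a ∈ I01) (hb : b ∈ I01) : star a b ≤ a := by
  calc star a b ≤ star a 1 := hs.mono a b a 1 ha hb ha one_mem le_rfl hb.2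
  _ = a := hs.one a ha

lemma star_le_snd {a b : ℝ} (ha : a ∈ I01) (hb : b ∈ I01) : star a b ≤ b := by
  rw [hs.comm a ha b hb]; exact star_le_fst hs hb ha

lemma star_zero {a : ℝ} (ha : a ∈ I01) : star a 0 = 0 :=
  le_antisymm (star_le_snd hs ha zero_mem) (star_mem hs ha zero_mem).1

lemma zero_star {a : ℝ} (ha : a ∈ I01) : star 0 a = 0 := by
  rw [hs.comm 0 zero_mem a ha]; exact star_zero hs ha


/-- A continuous t-norm has no interior idempotents under TN1. -/
lemma star_self_lt (htn1 : TN1 star) {e : ℝ} (he : e ∈ I01) (he0 : 0 < e)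
    (he1 : e < 1) : star e e < e := by
  rcases lt_or_ge (star e e) e with h | h
  · exact h
  have heq : star e e = e := le_antisymm (star_le_fst hs he he) h
  rcases le_or_gt e (1/2) with hhalf | hhalf
  · -- e ≤ 1/2 : star e (1-e) ≥ star e e = e but TN1 forces it ≤ 0
    have h1 : star e (1 - e) ≤ e - star e e := htn1 e he e he
    have h2 : star e e ≤ star e (1 - e) :=
      hs.mono e e e (1 - e) he he he ⟨by linarith, by linarith⟩ le_rfl (by linarith)
    linarith [heq ▸ h2, heq ▸ h1]
  · -- e > 1/2 : 1/2 is a fixed point of star e ·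
    have hmem2 : (1/2 : ℝ) ∈ I01 := ⟨by norm_num, by norm_num⟩
    have hcont : ContinuousOn (fun z => star e z) I01 := by
      have : ContinuousOn (fun z : ℝ => (e, z)) I01 :=
        (continuousOn_const.prodMk continuousOn_id)
      exact hs.continuous.comp this (fun z hz => ⟨he, hz⟩)
    have h0 : star e 0 = 0 := star_zero hs he
    have h1 : star e 1 = e := hs.one e he
    have hIVT : ∃ z ∈ Icc (0:ℝ) 1, star e z = 1/2 := by
      have := intermediate_value_Icc (by norm_num : (0:ℝ) ≤ 1) hcont
      have hmem : (1/2:ℝ) ∈ Icc (star e 0) (star e 1) := by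
        rw [h0, h1]; exact ⟨by norm_num, by linarith⟩
      exact this hmem
    obtain ⟨z, hz, hze⟩ := hIVT
    have hfix : star e (1/2) = 1/2 := by
      have : star e (star e z) = star e z := by
        rw [← hs.assoc e he e he z hz, heq]
      rw [hze] at this; exact this
    have := htn1 e he (1/2) hmem2
    rw [show (1:ℝ) - 1/2 = 1/2 by norm_num, hfix] at this
    linarith

/-- Strict decrease: multiplying by `c < 1` strictly decreases positive elements. -/
lemma star_lt_of_lt_one (htn1 : TN1 star) {b c : ℝ} (hb : b ∈ I01) (hb0 : 0 < b)
    (hc : c ∈ I01) (hc1 : c < 1) : star b c < b := by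
  rcases lt_or_ge (star b c) b with h | h
  · exact h
  exfalso
  have heq : star b c = b := le_antisymm (star_le_fst hs hb hc) h
  -- powers of c
  set p : ℕ → ℝ := fun k => Nat.rec c (fun _ q => star q c) k with hp
  have hp0 : p 0 = c := rfl
  have hpsucc : ∀ k, p (k+1) = star (p k) c := fun k => rfl
  have hpmem : ∀ k, p k ∈ I01 := by
    intro k; induction k with
    | zero => exact hc
    | succ k ih => rw [hpsucc]; exact star_mem hs ih hc
  have hbp : ∀ k, star b (p k) = b := by
    intro k; induction k with
    | zero => exact heq
    | succ k ih =>
      rw [hpsucc, ← hs.assoc b hb (p k) (hpmem k) c hc, ih, heq]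
  have hpadd : ∀ k l, star (p k) (p l) = p (k + l + 1) := by
    intro k l; induction l with
    | zero => rw [hp0]
    | succ l ih =>
      rw [hpsucc, ← hs.assoc (p k) (hpmem k) (p l) (hpmem l) c hc, ih]
      rfl
  have hanti : Antitone p := by
    apply antitone_nat_of_succ_le
    intro k; rw [hpsucc]; exact star_le_fst hs (hpmem k) hc
  have hbdd : BddBelow (Set.range p) := ⟨0, by rintro _ ⟨k, rfl⟩; exact (hpmem k).1⟩
  set l := ⨅ k, p k with hl
  have htend : Filter.Tendsto p Filter.atTop (nhds l) :=
    tendsto_atTop_ciInf hanti hbdd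
  have hlmem : l ∈ I01 := by
    constructor
    · exact le_ciInf fun k => (hpmem k).1
    · exact le_trans (ciInf_le hbdd 0) (hpmem 0).2
  have hllec : l ≤ c := hp0 ▸ ciInf_le hbdd 0
  -- pass to the limit in star b (p k) = b
  have hcwa : ∀ u v : ℝ, u ∈ I01 → v ∈ I01 →
      ∀ (w : ℕ → ℝ × ℝ), (∀ k, w k ∈ I01 ×ˢ I01) →
      Filter.Tendsto w Filter.atTop (nhds (u, v)) →
      Filter.Tendsto (fun k => star (w k).1 (w k).2) Filter.atTop (nhds (star u v)) := by
    intro u v hu hv w hw hwt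
    have h1 : Filter.Tendsto w Filter.atTop (nhdsWithin (u, v) (I01 ×ˢ I01)) := by
      rw [tendsto_nhdsWithin_iff]
      exact ⟨hwt, Filter.Eventually.of_forall hw⟩
    exact (hs.continuous (u, v) ⟨hu, hv⟩).tendsto.comp h1
  have hbl : star b l = b := by
    have ht1 : Filter.Tendsto (fun k => star b (p k)) Filter.atTop (nhds (star b l)) :=
      hcwa b l hb hlmem (fun k => (b, p k)) (fun k => ⟨hb, hpmem k⟩)
        (Filter.Tendsto.prodMk_nhds tendsto_const_nhds htend)
    have ht2 : Filter.Tendsto (fun k => star b (p k)) Filter.atTop (nhds b) := by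
      simp only [hbp]; exact tendsto_const_nhds
    exact tendsto_nhds_unique ht1 ht2
  have hll : star l l = l := by
    have hodd : Filter.Tendsto (fun k => p (k + k + 1)) Filter.atTop (nhds l) := by
      show Filter.Tendsto (p ∘ fun k => k + k + 1) Filter.atTop (nhds l)
      apply htend.comp
      rw [Filter.tendsto_atTop_atTop]
      exact fun n => ⟨n, fun a ha => by omega⟩
    have ht1 : Filter.Tendsto (fun k => star (p k) (p k)) Filter.atTop (nhds (star l l)) :=
      hcwa l l hlmem hlmem (fun k => (p k, p k)) (fun k => ⟨hpmem k, hpmem k⟩)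
        (Filter.Tendsto.prodMk_nhds htend htend)
    have ht2 : Filter.Tendsto (fun k => star (p k) (p k)) Filter.atTop (nhds l) := by
      simp only [hpadd]; exact hodd
    exact tendsto_nhds_unique ht1 ht2
  rcases eq_or_lt_of_le hlmem.1 with h0 | h0
  · -- l = 0 : star b 0 = 0 = b contradicts b > 0
    rw [← h0] at hbl
    rw [star_zero hs hb] at hbl
    exact absurd hbl.symm (ne_of_gt hb0)
  · exact absurd hll (ne_of_lt (star_self_lt hs htn1 hlmem h0 (lt_of_le_of_lt hllec hc1)))

/-- Uniform gap: on `[γ,1]`, multiplication by `1-η` decreases by at least some `η₂ > 0`. -/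
lemma uniform_gap (htn1 : TN1 star) {γ η : ℝ} (hγ0 : 0 < γ) (hγ1 : γ ≤ 1)
    (hη0 : 0 < η) (hη1 : η < 1) :
    ∃ η₂ > 0, ∀ b ∈ Icc γ 1, star b (1 - η) ≤ b - η₂ := by
  have huI : (1 - η) ∈ I01 := ⟨by linarith, by linarith⟩
  have hsub : Icc γ 1 ⊆ I01 := Icc_subset_Icc (le_of_lt hγ0) le_rfl
  have hcont : ContinuousOn (fun b => b - star b (1 - η)) (Icc γ 1) := by
    apply ContinuousOn.sub continuousOn_id
    have h1 : ContinuousOn (fun b : ℝ => (b, 1 - η)) (Icc γ 1) :=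
      continuousOn_id.prodMk continuousOn_const
    exact hs.continuous.comp h1 (fun b hb => ⟨hsub hb, huI⟩)
  obtain ⟨b₀, hb₀, hmin⟩ := isCompact_Icc.exists_isMinOn (nonempty_Icc.mpr hγ1) hcont
  refine ⟨b₀ - star b₀ (1 - η), ?_, ?_⟩
  · have := star_lt_of_lt_one hs htn1 (hsub hb₀) (lt_of_lt_of_le hγ0 hb₀.1) huI
      (by linarith)
    linarith
  · intro b hb
    have h2 : b₀ - star b₀ (1 - η) ≤ b - star b (1 - η) := hmin hb
    linarith




open Filter Topology in
lemma star_cwa {f g : ℝ → ℝ} {S : Set ℝ} {t : ℝ}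
    (hf : ContinuousWithinAt f S t) (hg : ContinuousWithinAt g S t)
    (hfm : ∀ᶠ s in nhdsWithin t S, f s ∈ I01)
    (hgm : ∀ᶠ s in nhdsWithin t S, g s ∈ I01)
    (hft : f t ∈ I01) (hgt : g t ∈ I01) :
    ContinuousWithinAt (fun s => star (f s) (g s)) S t := by
  have h1 : Tendsto (fun s => (f s, g s)) (nhdsWithin t S)
      (nhdsWithin (f t, g t) (I01 ×ˢ I01)) := by
    rw [tendsto_nhdsWithin_iff]
    exact ⟨(hf.prodMk hg), (hfm.and hgm).mono (fun s hs => ⟨hs.1, hs.2⟩)⟩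
  exact ((hs.continuous (f t, g t) ⟨hft, hgt⟩).tendsto).comp h1

open Filter Topology in
/-- Choice of `η`. -/
lemma exists_eta {γ ε : ℝ} (hγ0 : 0 < γ) (hγ1 : γ ≤ 1) (hε0 : 0 < ε) (hε1 : ε < 1) :
    ∃ η : ℝ, 0 < η ∧ η < 1 ∧ η < γ ∧ 0 < star γ (1 - η) ∧
      star (1 - ε) (1 - ε) < star (1 - η) (1 - η) := by
  have hγI : γ ∈ I01 := ⟨le_of_lt hγ0, hγ1⟩
  have hεI : (1 - ε) ∈ I01 := ⟨by linarith, by linarith⟩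
  have hlt : star (1 - ε) (1 - ε) < 1 := by
    have := star_le_fst hs hεI hεI
    linarith
  have hsub : Tendsto (fun δ : ℝ => 1 - δ) (nhdsWithin 0 (Ioi 0)) (nhds 1) := by
    have hc : Continuous (fun δ : ℝ => 1 - δ) := continuous_const.sub continuous_id
    exact (hc.tendsto' 0 1 (by norm_num)).mono_left nhdsWithin_le_nhds
  have hmemIoo : Ioo (0:ℝ) γ ∈ nhdsWithin (0:ℝ) (Ioi 0) :=
    Ioo_mem_nhdsGT_of_mem ⟨le_rfl, hγ0⟩
  have hmemI : ∀ᶠ δ in nhdsWithin (0:ℝ) (Ioi 0), (1 - δ) ∈ I01 := by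
    filter_upwards [hmemIoo] with δ hδ
    exact ⟨by linarith [hδ.2, hγ1], by linarith [hδ.1]⟩
  -- tendsto of star (1-δ) (1-δ) to 1
  have h11 : Tendsto (fun δ : ℝ => ((1:ℝ) - δ, (1:ℝ) - δ)) (nhdsWithin 0 (Ioi 0))
      (nhdsWithin (1, 1) (I01 ×ˢ I01)) := by
    rw [tendsto_nhdsWithin_iff]
    exact ⟨hsub.prodMk_nhds hsub, hmemI.mono (fun δ h => ⟨h, h⟩)⟩
  have hT1 : Tendsto (fun δ : ℝ => star (1 - δ) (1 - δ)) (nhdsWithin 0 (Ioi 0))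
      (nhds 1) := by
    have := ((hs.continuous (1, 1) ⟨one_mem, one_mem⟩).tendsto).comp h11
    rwa [hs.one 1 one_mem] at this
  have hT2 : Tendsto (fun δ : ℝ => star γ (1 - δ)) (nhdsWithin 0 (Ioi 0))
      (nhds γ) := by
    have hg : Tendsto (fun δ : ℝ => (γ, (1:ℝ) - δ)) (nhdsWithin 0 (Ioi 0))
        (nhdsWithin (γ, 1) (I01 ×ˢ I01)) := by
      rw [tendsto_nhdsWithin_iff]
      exact ⟨tendsto_const_nhds.prodMk_nhds hsub, hmemI.mono (fun δ h => ⟨hγI, h⟩)⟩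
    have := ((hs.continuous (γ, 1) ⟨hγI, one_mem⟩).tendsto).comp hg
    rwa [hs.one γ hγI] at this
  have hev1 : ∀ᶠ δ in nhdsWithin (0:ℝ) (Ioi 0),
      star (1 - ε) (1 - ε) < star (1 - δ) (1 - δ) :=
    hT1.eventually (eventually_gt_nhds hlt)
  have hev2 : ∀ᶠ δ in nhdsWithin (0:ℝ) (Ioi 0), 0 < star γ (1 - δ) :=
    hT2.eventually (eventually_gt_nhds hγ0)
  have : ∀ᶠ δ in nhdsWithin (0:ℝ) (Ioi 0),
      (δ ∈ Ioo (0:ℝ) γ) ∧ star (1 - ε) (1 - ε) < star (1 - δ) (1 - δ) ∧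
        0 < star γ (1 - δ) := by
    filter_upwards [hmemIoo, hev1, hev2] with δ h1 h2 h3
    exact ⟨h1, h2, h3⟩
  obtain ⟨δ, hδ⟩ := this.exists
  exact ⟨δ, hδ.1.1, by linarith [hδ.1.2, hγ1], hδ.1.2, hδ.2.2, hδ.2.1⟩

end Basic

structure UI : Type where
  val : ℝ
  mem : val ∈ Icc (0:ℝ) 1

instance : LE UI := ⟨fun a b => a.val ≤ b.val⟩

instance : Preorder UI where
  le_refl a := le_refl a.val
  le_trans a b c h1 h2 := by
    show a.val ≤ c.val
    exact le_trans (show a.val ≤ b.val from h1) (show b.val ≤ c.val from h2)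
  lt_iff_le_not_ge a b := Iff.rfl

lemma UI.ext' {a b : UI} (h : a.val = b.val) : a = b := by
  cases a; cases b; cases h; rfl

lemma UI.le_def {a b : UI} : a ≤ b ↔ a.val ≤ b.val := Iff.rfl

noncomputable def uiMonoid (hs : IsContinuousTNorm star) : CommMonoid UI where
  mul a b := ⟨star a.val b.val, hs.mem a.val a.mem b.val b.mem⟩
  mul_assoc a b c := UI.ext' (hs.assoc a.val a.mem b.val b.mem c.val c.mem)
  one := ⟨1, by constructor <;> norm_num⟩
  one_mul a := UI.ext' (by
    show star 1 a.val = a.val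
    rw [hs.comm 1 (by constructor <;> norm_num) a.val a.mem]
    exact hs.one a.val a.mem)
  mul_one a := UI.ext' (hs.one a.val a.mem)
  mul_comm a b := UI.ext' (hs.comm a.val a.mem b.val b.mem)


open Filter Topology in
lemma sup'_cwa {ι : Type*} (F : Finset ι) (hne : F.Nonempty) (f : ι → ℝ → ℝ)
    {S : Set ℝ} {t : ℝ} (h : ∀ i ∈ F, ContinuousWithinAt (f i) S t) :
    ContinuousWithinAt (fun s => F.sup' hne (fun i => f i s)) S t := by
  have key : ∀ (G : Finset ι) (hne : G.Nonempty),
      (∀ i ∈ G, ContinuousWithinAt (f i) S t) →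
      ContinuousWithinAt (fun s => G.sup' hne (fun i => f i s)) S t := by
    intro G hne
    induction hne using Finset.Nonempty.cons_induction with
    | singleton a =>
      intro h'
      exact (h' a (by simp)).congr (fun s _ => by simp) (by simp)
    | cons a G ha hG ih =>
      intro h'
      simp only [Finset.sup'_cons hG]
      exact (h' a (by simp)).sup (ih (fun i hi => h' i (by simp [hi])))
  exact key F hne h

end TNormAux


namespace FuzzyGlue
open TNormAux

variable {X Y : Type u}

/-- The net part of the glued metric. -/
noncomputable def glueT (star : ℝ → ℝ → ℝ) (MX : X → X → ℝ → ℝ) (MY : Y → Y → ℝ → ℝ)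
    {K : ℕ} [Nonempty (Fin K)] (a : Fin K → X) (b : Fin K → Y) (η : ℝ)
    (x : X) (y : Y) (s : ℝ) : ℝ :=
  (Finset.univ : Finset (Fin K)).sup' Finset.univ_nonempty
    (fun i => star (star (MX x (a i) s) (1 - η)) (MY (b i) y s))

/-- The cross part of the glued metric. -/
noncomputable def glueCross (star : ℝ → ℝ → ℝ) (MX : X → X → ℝ → ℝ) (MY : Y → Y → ℝ → ℝ)
    (C : ℝ → ℝ) (t₀ η : ℝ) {K : ℕ} [Nonempty (Fin K)] (a : Fin K → X) (b : Fin K → Y)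
    (x : X) (y : Y) (s : ℝ) : ℝ :=
  if 0 < s then
    max (star (C s) (1 - η))
      (if t₀ < s then glueT star MX MY a b η x y s else 0)
  else 0

/-- The glued fuzzy metric on the disjoint union. -/
noncomputable def glue (star : ℝ → ℝ → ℝ) (MX : X → X → ℝ → ℝ) (MY : Y → Y → ℝ → ℝ)
    (C : ℝ → ℝ) (t₀ η : ℝ) {K : ℕ} [Nonempty (Fin K)] (a : Fin K → X) (b : Fin K → Y) :
    (X ⊕ Y) → (X ⊕ Y) → ℝ → ℝ
  | Sum.inl x, Sum.inl x' => MX x x'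
  | Sum.inl x, Sum.inr y => glueCross star MX MY C t₀ η a b x y
  | Sum.inr y, Sum.inl x => glueCross star MX MY C t₀ η a b x y
  | Sum.inr y, Sum.inr y' => MY y y'

end FuzzyGlue

namespace FuzzyGlue
open TNormAux Filter Topology

theorem glue_mgh_lower {X Y : Type u} [Nonempty X] [Nonempty Y]
    (star : ℝ → ℝ → ℝ) (hs : IsContinuousTNorm star)
    (MX : X → X → ℝ → ℝ) (MY : Y → Y → ℝ → ℝ)
    (hMX : IsNAFuzzyMetric star MX) (hMY : IsNAFuzzyMetric star MY)
    (C : ℝ → ℝ) (hCmono : MonotoneOn C (Ioi 0))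
    (hClc : ∀ s, 0 < s → ContinuousWithinAt C (Iio s) s)
    (hC0 : ∀ s, 0 < s → 0 < C s) (hC1 : ∀ s, 0 < s → C s ≤ 1)
    (hCdX : ∀ s, 0 < s → fuzzyDiam MX s ≥ C s) (hCdY : ∀ s, 0 < s → fuzzyDiam MY s ≥ C s)
    (t₀ η t : ℝ) (ht₀ : 0 < t₀) (htt : t₀ < t) (hη0 : 0 < η) (hη1 : η < 1)
    {K : ℕ} [Nonempty (Fin K)] (a : Fin K → X) (b : Fin K → Y)
    (hnetX : ∀ p : X, ∃ i, 1 - η < MX p (a i) t₀)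
    (hnetY : ∀ q : Y, ∃ i, 1 - η < MY q (b i) t₀)
    (hXY : ∀ s, t₀ < s → ∀ i j, star (MY (b i) (b j) s) (1 - η) ≤ MX (a i) (a j) s)
    (hYX : ∀ s, t₀ < s → ∀ i j, star (MX (a i) (a j) s) (1 - η) ≤ MY (b i) (b j) s) :
    star (1 - η) (1 - η) ≤ MGH star MX MY t := by
  classical
  letI : CommMonoid UI := uiMonoid hs
  letI : Std.Associative (α := UI) (· * ·) := ⟨mul_assoc⟩
  letI : Std.Commutative (α := UI) (· * ·) := ⟨mul_comm⟩
  have hmul : ∀ p q r w : UI, p ≤ r → q ≤ w → p * q ≤ r * w := by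
    intro p q r w h1 h2
    exact hs.mono p.val q.val r.val w.val p.mem q.mem r.mem w.mem h1 h2
  have huI : (1:ℝ) - η ∈ Icc (0:ℝ) 1 := ⟨by linarith, by linarith⟩
  have hU1 : (⟨1 - η, huI⟩ : UI) ≤ 1 := by
    show (1:ℝ) - η ≤ (1 : UI).val
    show (1:ℝ) - η ≤ 1
    linarith
  have hCI : ∀ r : ℝ, 0 < r → C r ∈ Icc (0:ℝ) 1 := fun r hr => ⟨(hC0 r hr).le, hC1 r hr⟩
  -- diameter lower bounds
  have hdX : ∀ r : ℝ, 0 < r → ∀ x x' : X, C r ≤ MX x x' r := by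
    intro r hr x x'
    refine le_trans (hCdX r hr) ?_
    have hbdd : BddBelow (Set.range (fun p : X × X => MX p.1 p.2 r)) :=
      ⟨0, by rintro v ⟨p, rfl⟩; exact (hMX.range p.1 p.2 r hr.le).1⟩
    exact ciInf_le hbdd (x, x')
  have hdY : ∀ r : ℝ, 0 < r → ∀ y y' : Y, C r ≤ MY y y' r := by
    intro r hr y y'
    refine le_trans (hCdY r hr) ?_
    have hbdd : BddBelow (Set.range (fun p : Y × Y => MY p.1 p.2 r)) :=
      ⟨0, by rintro v ⟨p, rfl⟩; exact (hMY.range p.1 p.2 r hr.le).1⟩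
    exact ciInf_le hbdd (y, y')
  -- time monotonicity
  have htmX : ∀ (x x' : X) (r r' : ℝ), 0 < r → r ≤ r' → MX x x' r ≤ MX x x' r' := by
    intro x x' r r' hr hrr
    have hr' : 0 < r' := lt_of_lt_of_le hr hrr
    have h1 : MX x' x' r' = 1 := (hMX.km2 x' x').mpr rfl r' hr'
    have h2 := hMX.na x x' x' r r' hr hr'
    rw [h1, hs.one _ (hMX.range x x' r hr.le), max_eq_right hrr] at h2
    exact h2
  have htmY : ∀ (y y' : Y) (r r' : ℝ), 0 < r → r ≤ r' → MY y y' r ≤ MY y y' r' := by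
    intro y y' r r' hr hrr
    have hr' : 0 < r' := lt_of_lt_of_le hr hrr
    have h1 : MY y' y' r' = 1 := (hMY.km2 y' y').mpr rfl r' hr'
    have h2 := hMY.na y y' y' r r' hr hr'
    rw [h1, hs.one _ (hMY.range y y' r hr.le), max_eq_right hrr] at h2
    exact h2
  -- abbreviations
  set T := glueT star MX MY a b η with hTdef
  set cross := glueCross star MX MY C t₀ η a b with hcrossdef
  set Dv : ℝ → ℝ := fun s => star (C s) (1 - η) with hDdef
  set G := glue star MX MY C t₀ η a b with hGdef
  have hDmem : ∀ s : ℝ, 0 < s → Dv s ∈ Icc (0:ℝ) 1 :=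
    fun s hs0 => star_mem hs (hCI s hs0) huI
  have hDle : ∀ s : ℝ, 0 < s → Dv s ≤ 1 - η :=
    fun s hs0 => star_le_snd hs (hCI s hs0) huI
  have hDleC : ∀ s : ℝ, 0 < s → Dv s ≤ C s :=
    fun s hs0 => star_le_fst hs (hCI s hs0) huI
  have hDmono : ∀ r r' : ℝ, 0 < r → r ≤ r' → Dv r ≤ Dv r' := by
    intro r r' hr hrr
    have hr' : 0 < r' := lt_of_lt_of_le hr hrr
    exact hs.mono _ _ _ _ (hCI r hr) huI (hCI r' hr') huI
      (hCmono hr hr' hrr) le_rfl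
  have hterm_mem : ∀ (x : X) (y : Y) (s : ℝ), 0 ≤ s → ∀ i : Fin K,
      star (star (MX x (a i) s) (1 - η)) (MY (b i) y s) ∈ Icc (0:ℝ) 1 := by
    intro x y s hs0 i
    exact star_mem hs (star_mem hs (hMX.range _ _ s hs0) huI) (hMY.range _ _ s hs0)
  have hterm_le_T : ∀ (x : X) (y : Y) (s : ℝ) (i : Fin K),
      star (star (MX x (a i) s) (1 - η)) (MY (b i) y s) ≤ T x y s := by
    intro x y s i
    rw [hTdef]
    exact Finset.le_sup'
      (fun i => star (star (MX x (a i) s) (1 - η)) (MY (b i) y s)) (Finset.mem_univ i)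
  have hTle' : ∀ (x : X) (y : Y) (s : ℝ) (c : ℝ),
      (∀ i : Fin K, star (star (MX x (a i) s) (1 - η)) (MY (b i) y s) ≤ c) →
      T x y s ≤ c := by
    intro x y s c hc
    rw [hTdef]
    exact Finset.sup'_le _ _ (fun i _ => hc i)
  have hTmem : ∀ (x : X) (y : Y) (s : ℝ), 0 ≤ s → T x y s ∈ Icc (0:ℝ) 1 := by
    intro x y s hs0
    constructor
    · obtain ⟨i⟩ := (inferInstance : Nonempty (Fin K))
      exact le_trans (hterm_mem x y s hs0 i).1 (hterm_le_T x y s i)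
    · exact hTle' x y s 1 (fun i => (hterm_mem x y s hs0 i).2)
  have hTle : ∀ (x : X) (y : Y) (s : ℝ), 0 ≤ s → T x y s ≤ 1 - η := by
    intro x y s hs0
    refine hTle' x y s _ (fun i => ?_)
    exact le_trans
      (star_le_fst hs (star_mem hs (hMX.range _ _ s hs0) huI) (hMY.range _ _ s hs0))
      (star_le_snd hs (hMX.range _ _ s hs0) huI)
  have hTexists : ∀ (x : X) (y : Y) (s : ℝ), ∃ i : Fin K,
      T x y s = star (star (MX x (a i) s) (1 - η)) (MY (b i) y s) := by
    intro x y s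
    obtain ⟨i, _, hi⟩ := Finset.exists_mem_eq_sup' (Finset.univ_nonempty)
      (fun i : Fin K => star (star (MX x (a i) s) (1 - η)) (MY (b i) y s))
    refine ⟨i, ?_⟩
    rw [hTdef]
    exact hi
  have hcross_pos_def : ∀ (x : X) (y : Y) (s : ℝ), 0 < s →
      cross x y s = max (Dv s) (if t₀ < s then T x y s else 0) := by
    intro x y s hs0
    rw [hcrossdef, glueCross, if_pos hs0]
  have hcrossmem : ∀ (x : X) (y : Y) (s : ℝ), 0 ≤ s → cross x y s ∈ Icc (0:ℝ) 1 := by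
    intro x y s hs0
    rcases lt_or_eq_of_le hs0 with hlt | heq
    · rw [hcross_pos_def x y s hlt]
      constructor
      · exact le_max_of_le_left (hDmem s hlt).1
      · refine max_le (hDmem s hlt).2 ?_
        split_ifs with h
        · exact (hTmem x y s hs0).2
        · norm_num
    · rw [hcrossdef, glueCross, if_neg (by rw [← heq]; exact lt_irrefl 0)]
      constructor <;> norm_num
  have hcross_le : ∀ (x : X) (y : Y) (s : ℝ), 0 < s → cross x y s ≤ 1 - η := by
    intro x y s hs0
    rw [hcross_pos_def x y s hs0]
    refine max_le (hDle s hs0) ?_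
    split_ifs with h
    · exact hTle x y s hs0.le
    · linarith
  have hD_le_cross : ∀ (x : X) (y : Y) (s : ℝ), 0 < s → Dv s ≤ cross x y s := by
    intro x y s hs0
    rw [hcross_pos_def x y s hs0]; exact le_max_left _ _
  have hT_le_cross : ∀ (x : X) (y : Y) (s : ℝ), t₀ < s → T x y s ≤ cross x y s := by
    intro x y s hts
    rw [hcross_pos_def x y s (lt_trans ht₀ hts), if_pos hts]
    exact le_max_right _ _
  have hcross_cases : ∀ (x : X) (y : Y) (s : ℝ), 0 < s →
      cross x y s = Dv s ∨ (t₀ < s ∧ cross x y s = T x y s) := by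
    intro x y s hs0
    rw [hcross_pos_def x y s hs0]
    by_cases hts : t₀ < s
    · rw [if_pos hts]
      rcases max_cases (Dv s) (T x y s) with ⟨h, _⟩ | ⟨h, _⟩
      · exact Or.inl h
      · exact Or.inr ⟨hts, h⟩
    · rw [if_neg hts]
      exact Or.inl (max_eq_left (hDmem s hs0).1)
  -- left-continuity of the cross part
  have hIoo : ∀ t' : ℝ, 0 < t' → Ioo (0:ℝ) t' ∈ nhdsWithin t' (Iio t') :=
    fun t' ht' => Ioo_mem_nhdsLT_of_mem ⟨ht', le_rfl⟩
  have hDcwa : ∀ t' : ℝ, 0 < t' → ContinuousWithinAt Dv (Iio t') t' := by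
    intro t' ht'
    refine star_cwa hs (hClc t' ht') continuousWithinAt_const ?_ ?_ (hCI t' ht') huI
    · filter_upwards [hIoo t' ht'] with s hs' using hCI s hs'.1
    · exact Eventually.of_forall (fun _ => huI)
  have hcross_cwa : ∀ (x : X) (y : Y) (t' : ℝ), 0 < t' →
      ContinuousWithinAt (cross x y) (Iio t') t' := by
    intro x y t' ht'
    by_cases htt0 : t₀ < t'
    · have hTcwa : ContinuousWithinAt (fun s => T x y s) (Iio t') t' := by
        rw [hTdef]
        refine sup'_cwa Finset.univ Finset.univ_nonempty
          (fun i s => star (star (MX x (a i) s) (1 - η)) (MY (b i) y s))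
          (fun i _ => ?_)
        have hmX : ∀ᶠ s in nhdsWithin t' (Iio t'), MX x (a i) s ∈ Icc (0:ℝ) 1 := by
          filter_upwards [hIoo t' ht'] with s hs' using hMX.range _ _ s hs'.1.le
        have hmY : ∀ᶠ s in nhdsWithin t' (Iio t'), MY (b i) y s ∈ Icc (0:ℝ) 1 := by
          filter_upwards [hIoo t' ht'] with s hs' using hMY.range _ _ s hs'.1.le
        refine star_cwa hs ?_ (hMY.km5 (b i) y t' ht') ?_ hmY
          (star_mem hs (hMX.range _ _ t' ht'.le) huI) (hMY.range _ _ t' ht'.le)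
        · exact star_cwa hs (hMX.km5 x (a i) t' ht') continuousWithinAt_const hmX
            (Eventually.of_forall (fun _ => huI)) (hMX.range _ _ t' ht'.le) huI
        · filter_upwards [hmX] with s hs' using star_mem hs hs' huI
      have hMx : ContinuousWithinAt (fun s => max (Dv s) (T x y s)) (Iio t') t' :=
        (hDcwa t' ht').max hTcwa
      refine hMx.congr_of_eventuallyEq ?_ ?_
      · have hIoo2 : Ioo t₀ t' ∈ nhdsWithin t' (Iio t') :=
          Ioo_mem_nhdsLT_of_mem ⟨htt0, le_rfl⟩
        filter_upwards [hIoo2] with s hs'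
        rw [hcross_pos_def x y s (lt_trans ht₀ hs'.1), if_pos hs'.1]
      · rw [hcross_pos_def x y t' ht', if_pos htt0]
    · have hMx : ContinuousWithinAt (fun s => max (Dv s) (0:ℝ)) (Iio t') t' :=
        (hDcwa t' ht').max continuousWithinAt_const
      refine hMx.congr_of_eventuallyEq ?_ ?_
      · filter_upwards [hIoo t' ht'] with s hs'
        rw [hcross_pos_def x y s hs'.1,
          if_neg (fun h => htt0 (lt_trans h hs'.2))]
      · rw [hcross_pos_def x y t' ht', if_neg htt0]
  -- UI-level key computations
  have hUle : ∀ A : UI, A ≤ A := fun A => le_refl A.val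
  have keyA : ∀ A B E G H : UI, A * B ≤ G → E ≤ H →
      A * ((B * ⟨1-η,huI⟩) * E) ≤ (G * ⟨1-η,huI⟩) * H := by
    intro A B E G' H' h1 h2
    have e : A * ((B * ⟨1-η,huI⟩) * E) = ((A * B) * ⟨1-η,huI⟩) * E := by ac_rfl
    rw [e]
    exact hmul _ _ _ _ (hmul _ _ _ _ h1 (hUle _)) h2
  have keyB : ∀ A B E G H : UI, A ≤ G → B * E ≤ H →
      ((A * ⟨1-η,huI⟩) * B) * E ≤ (G * ⟨1-η,huI⟩) * H := by
    intro A B E G' H' h1 h2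
    have e : ((A * ⟨1-η,huI⟩) * B) * E = (A * ⟨1-η,huI⟩) * (B * E) := by ac_rfl
    rw [e]
    exact hmul _ _ _ _ (hmul _ _ _ _ h1 (hUle _)) h2
  have keyC : ∀ A B E G H : UI, E * A ≤ G → B ≤ H →
      ((A * ⟨1-η,huI⟩) * B) * E ≤ (G * ⟨1-η,huI⟩) * H := by
    intro A B E G' H' h1 h2
    have e : ((A * ⟨1-η,huI⟩) * B) * E = ((E * A) * ⟨1-η,huI⟩) * B := by ac_rfl
    rw [e]
    exact hmul _ _ _ _ (hmul _ _ _ _ h1 (hUle _)) h2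
  have keyD : ∀ A B E G H : UI, B ≤ G → E * A ≤ H →
      A * ((B * ⟨1-η,huI⟩) * E) ≤ (G * ⟨1-η,huI⟩) * H := by
    intro A B E G' H' h1 h2
    have e : A * ((B * ⟨1-η,huI⟩) * E) = (B * ⟨1-η,huI⟩) * (E * A) := by ac_rfl
    have e2 : (G' * ⟨1-η,huI⟩) * H' = (G' * ⟨1-η,huI⟩) * H' := rfl
    rw [e]
    exact hmul _ _ _ _ (hmul _ _ _ _ h1 (hUle _)) h2
  have keyE : ∀ A1 B1 A2 B2 Gm Hm A1' P A2' Z : UI,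
      B1 * B2 ≤ Gm → Gm * ⟨1-η,huI⟩ ≤ Hm → A1 ≤ A1' → A1' * Hm ≤ P →
      A2 ≤ A2' → P * A2' ≤ Z →
      ((A1 * ⟨1-η,huI⟩) * B1) * ((A2 * ⟨1-η,huI⟩) * B2) ≤ Z := by
    intro A1 B1 A2 B2 Gm Hm A1' P A2' Z h1 h2 h3 h4 h5 h6
    have e : ((A1 * ⟨1-η,huI⟩) * B1) * ((A2 * ⟨1-η,huI⟩) * B2)
        = ((A1 * ((B1 * B2) * ⟨1-η,huI⟩)) * A2) * ⟨1-η,huI⟩ := by ac_rfl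
    rw [e]
    have s1 : (B1 * B2) * ⟨1-η,huI⟩ ≤ Hm := le_trans (hmul _ _ _ _ h1 (hUle _)) h2
    have s2 : A1 * ((B1 * B2) * ⟨1-η,huI⟩) ≤ P :=
      le_trans (hmul _ _ _ _ h3 s1) h4
    have s3 : (A1 * ((B1 * B2) * ⟨1-η,huI⟩)) * A2 ≤ Z :=
      le_trans (hmul _ _ _ _ s2 h5) h6
    calc ((A1 * ((B1 * B2) * ⟨1-η,huI⟩)) * A2) * ⟨1-η,huI⟩ ≤ Z * 1 :=
          hmul _ _ _ _ s3 hU1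
      _ = Z := mul_one Z
  have keyF : ∀ A1 B1 A2 B2 Gm Hm B1' P B2' Z : UI,
      A1 * A2 ≤ Gm → Gm * ⟨1-η,huI⟩ ≤ Hm → B1 ≤ B1' → B1' * Hm ≤ P →
      B2 ≤ B2' → P * B2' ≤ Z →
      ((A1 * ⟨1-η,huI⟩) * B1) * ((A2 * ⟨1-η,huI⟩) * B2) ≤ Z := by
    intro A1 B1 A2 B2 Gm Hm B1' P B2' Z h1 h2 h3 h4 h5 h6
    have e : ((A1 * ⟨1-η,huI⟩) * B1) * ((A2 * ⟨1-η,huI⟩) * B2)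
        = ((B1 * ((A1 * A2) * ⟨1-η,huI⟩)) * B2) * ⟨1-η,huI⟩ := by ac_rfl
    rw [e]
    have s1 : (A1 * A2) * ⟨1-η,huI⟩ ≤ Hm := le_trans (hmul _ _ _ _ h1 (hUle _)) h2
    have s2 : B1 * ((A1 * A2) * ⟨1-η,huI⟩) ≤ P :=
      le_trans (hmul _ _ _ _ h3 s1) h4
    have s3 : (B1 * ((A1 * A2) * ⟨1-η,huI⟩)) * B2 ≤ Z :=
      le_trans (hmul _ _ _ _ s2 h5) h6
    calc ((B1 * ((A1 * A2) * ⟨1-η,huI⟩)) * B2) * ⟨1-η,huI⟩ ≤ Z * 1 :=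
          hmul _ _ _ _ s3 hU1
      _ = Z := mul_one Z
  -- the non-Archimedean axiom
  have hna : ∀ (p q r : X ⊕ Y) (t' s' : ℝ), 0 < t' → 0 < s' →
      star (G p q t') (G q r s') ≤ G p r (max t' s') := by
    intro p q r t' s' ht' hs'
    have hR : 0 < max t' s' := lt_of_lt_of_le ht' (le_max_left _ _)
    have ht'R : t' ≤ max t' s' := le_max_left _ _
    have hs'R : s' ≤ max t' s' := le_max_right _ _
    rcases p with x | y <;> rcases q with x' | y' <;> rcases r with x'' | y''
    -- LLL
    · exact hMX.na x x' x'' t' s' ht' hs'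
    -- LLR
    · show star (MX x x' t') (cross x' y'' s') ≤ cross x y'' (max t' s')
      rcases hcross_cases x' y'' s' hs' with hD | ⟨hts, hT⟩
      · rw [hD]
        calc star (MX x x' t') (Dv s')
            ≤ Dv s' := star_le_snd hs (hMX.range _ _ _ ht'.le) (hDmem s' hs')
          _ ≤ Dv (max t' s') := hDmono s' _ hs' hs'R
          _ ≤ cross x y'' (max t' s') := hD_le_cross _ _ _ hR
      · rw [hT]
        obtain ⟨i, hi⟩ := hTexists x' y'' s'
        rw [hi]
        refine le_trans ?_ (le_trans (hterm_le_T x y'' (max t' s') i)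
          (hT_le_cross x y'' (max t' s') (lt_of_lt_of_le hts hs'R)))
        have m1 : MX x x' t' ∈ Icc (0:ℝ) 1 := hMX.range _ _ _ ht'.le
        have m2 : MX x' (a i) s' ∈ Icc (0:ℝ) 1 := hMX.range _ _ _ hs'.le
        have m3 : MY (b i) y'' s' ∈ Icc (0:ℝ) 1 := hMY.range _ _ _ hs'.le
        have m4 : MX x (a i) (max t' s') ∈ Icc (0:ℝ) 1 := hMX.range _ _ _ hR.le
        have m5 : MY (b i) y'' (max t' s') ∈ Icc (0:ℝ) 1 := hMY.range _ _ _ hR.le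
        have h1 : star (MX x x' t') (MX x' (a i) s') ≤ MX x (a i) (max t' s') :=
          hMX.na x x' (a i) t' s' ht' hs'
        have h2 : MY (b i) y'' s' ≤ MY (b i) y'' (max t' s') := htmY _ _ _ _ hs' hs'R
        exact keyA ⟨MX x x' t', m1⟩ ⟨MX x' (a i) s', m2⟩ ⟨MY (b i) y'' s', m3⟩
          ⟨MX x (a i) (max t' s'), m4⟩ ⟨MY (b i) y'' (max t' s'), m5⟩ h1 h2
    -- LRL
    · show star (cross x y' t') (cross x'' y' s') ≤ MX x x'' (max t' s')
      rcases hcross_cases x y' t' ht' with hD1 | ⟨hts1, hT1⟩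
      · rw [hD1]
        calc star (Dv t') (cross x'' y' s')
            ≤ Dv t' := star_le_fst hs (hDmem t' ht') (hcrossmem _ _ _ hs'.le)
          _ ≤ C t' := hDleC t' ht'
          _ ≤ C (max t' s') := hCmono ht' hR ht'R
          _ ≤ MX x x'' (max t' s') := hdX _ hR x x''
      rcases hcross_cases x'' y' s' hs' with hD2 | ⟨hts2, hT2⟩
      · rw [hD2]
        calc star (cross x y' t') (Dv s')
            ≤ Dv s' := star_le_snd hs (hcrossmem _ _ _ ht'.le) (hDmem s' hs')
          _ ≤ C s' := hDleC s' hs'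
          _ ≤ C (max t' s') := hCmono hs' hR hs'R
          _ ≤ MX x x'' (max t' s') := hdX _ hR x x''
      · rw [hT1, hT2]
        obtain ⟨i, hi⟩ := hTexists x y' t'
        obtain ⟨j, hj⟩ := hTexists x'' y' s'
        rw [hi, hj]
        have htR : t₀ < max t' s' := lt_of_lt_of_le hts1 ht'R
        have m1 : MX x (a i) t' ∈ Icc (0:ℝ) 1 := hMX.range _ _ _ ht'.le
        have m2 : MY (b i) y' t' ∈ Icc (0:ℝ) 1 := hMY.range _ _ _ ht'.le
        have m3 : MX x'' (a j) s' ∈ Icc (0:ℝ) 1 := hMX.range _ _ _ hs'.le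
        have m4 : MY (b j) y' s' ∈ Icc (0:ℝ) 1 := hMY.range _ _ _ hs'.le
        have m5 : MY (b i) (b j) (max t' s') ∈ Icc (0:ℝ) 1 := hMY.range _ _ _ hR.le
        have m6 : MX (a i) (a j) (max t' s') ∈ Icc (0:ℝ) 1 := hMX.range _ _ _ hR.le
        have m7 : MX x (a i) (max t' s') ∈ Icc (0:ℝ) 1 := hMX.range _ _ _ hR.le
        have m8 : MX x (a j) (max t' s') ∈ Icc (0:ℝ) 1 := hMX.range _ _ _ hR.le
        have m9 : MX (a j) x'' (max t' s') ∈ Icc (0:ℝ) 1 := hMX.range _ _ _ hR.le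
        have m10 : MX x x'' (max t' s') ∈ Icc (0:ℝ) 1 := hMX.range _ _ _ hR.le
        have h1 : star (MY (b i) y' t') (MY (b j) y' s') ≤ MY (b i) (b j) (max t' s') := by
          rw [hMY.km3 (b j) y' s']
          exact hMY.na (b i) y' (b j) t' s' ht' hs'
        have h2 : star (MY (b i) (b j) (max t' s')) (1 - η) ≤ MX (a i) (a j) (max t' s') :=
          hXY _ htR i j
        have h3 : MX x (a i) t' ≤ MX x (a i) (max t' s') := htmX _ _ _ _ ht' ht'R
        have h4 : star (MX x (a i) (max t' s')) (MX (a i) (a j) (max t' s'))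
            ≤ MX x (a j) (max t' s') := by
          have := hMX.na x (a i) (a j) (max t' s') (max t' s') hR hR
          rwa [max_self] at this
        have h5 : MX x'' (a j) s' ≤ MX (a j) x'' (max t' s') := by
          rw [hMX.km3]
          exact htmX _ _ _ _ hs' hs'R
        have h6 : star (MX x (a j) (max t' s')) (MX (a j) x'' (max t' s'))
            ≤ MX x x'' (max t' s') := by
          have := hMX.na x (a j) x'' (max t' s') (max t' s') hR hR
          rwa [max_self] at this
        exact keyE ⟨MX x (a i) t', m1⟩ ⟨MY (b i) y' t', m2⟩ ⟨MX x'' (a j) s', m3⟩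
          ⟨MY (b j) y' s', m4⟩ ⟨MY (b i) (b j) (max t' s'), m5⟩
          ⟨MX (a i) (a j) (max t' s'), m6⟩ ⟨MX x (a i) (max t' s'), m7⟩
          ⟨MX x (a j) (max t' s'), m8⟩ ⟨MX (a j) x'' (max t' s'), m9⟩
          ⟨MX x x'' (max t' s'), m10⟩ h1 h2 h3 h4 h5 h6
    -- LRR
    · show star (cross x y' t') (MY y' y'' s') ≤ cross x y'' (max t' s')
      rcases hcross_cases x y' t' ht' with hD | ⟨hts, hT⟩
      · rw [hD]
        calc star (Dv t') (MY y' y'' s')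
            ≤ Dv t' := star_le_fst hs (hDmem t' ht') (hMY.range _ _ _ hs'.le)
          _ ≤ Dv (max t' s') := hDmono t' _ ht' ht'R
          _ ≤ cross x y'' (max t' s') := hD_le_cross _ _ _ hR
      · rw [hT]
        obtain ⟨i, hi⟩ := hTexists x y' t'
        rw [hi]
        refine le_trans ?_ (le_trans (hterm_le_T x y'' (max t' s') i)
          (hT_le_cross x y'' (max t' s') (lt_of_lt_of_le hts ht'R)))
        have m1 : MX x (a i) t' ∈ Icc (0:ℝ) 1 := hMX.range _ _ _ ht'.le
        have m2 : MY (b i) y' t' ∈ Icc (0:ℝ) 1 := hMY.range _ _ _ ht'.le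
        have m3 : MY y' y'' s' ∈ Icc (0:ℝ) 1 := hMY.range _ _ _ hs'.le
        have m4 : MX x (a i) (max t' s') ∈ Icc (0:ℝ) 1 := hMX.range _ _ _ hR.le
        have m5 : MY (b i) y'' (max t' s') ∈ Icc (0:ℝ) 1 := hMY.range _ _ _ hR.le
        have h1 : MX x (a i) t' ≤ MX x (a i) (max t' s') := htmX _ _ _ _ ht' ht'R
        have h2 : star (MY (b i) y' t') (MY y' y'' s') ≤ MY (b i) y'' (max t' s') :=
          hMY.na (b i) y' y'' t' s' ht' hs'
        exact keyB ⟨MX x (a i) t', m1⟩ ⟨MY (b i) y' t', m2⟩ ⟨MY y' y'' s', m3⟩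
          ⟨MX x (a i) (max t' s'), m4⟩ ⟨MY (b i) y'' (max t' s'), m5⟩ h1 h2
    -- RLL
    · show star (cross x' y t') (MX x' x'' s') ≤ cross x'' y (max t' s')
      rcases hcross_cases x' y t' ht' with hD | ⟨hts, hT⟩
      · rw [hD]
        calc star (Dv t') (MX x' x'' s')
            ≤ Dv t' := star_le_fst hs (hDmem t' ht') (hMX.range _ _ _ hs'.le)
          _ ≤ Dv (max t' s') := hDmono t' _ ht' ht'R
          _ ≤ cross x'' y (max t' s') := hD_le_cross _ _ _ hR
      · rw [hT]
        obtain ⟨i, hi⟩ := hTexists x' y t'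
        rw [hi]
        refine le_trans ?_ (le_trans (hterm_le_T x'' y (max t' s') i)
          (hT_le_cross x'' y (max t' s') (lt_of_lt_of_le hts ht'R)))
        have m1 : MX x' (a i) t' ∈ Icc (0:ℝ) 1 := hMX.range _ _ _ ht'.le
        have m2 : MY (b i) y t' ∈ Icc (0:ℝ) 1 := hMY.range _ _ _ ht'.le
        have m3 : MX x' x'' s' ∈ Icc (0:ℝ) 1 := hMX.range _ _ _ hs'.le
        have m4 : MX x'' (a i) (max t' s') ∈ Icc (0:ℝ) 1 := hMX.range _ _ _ hR.le
        have m5 : MY (b i) y (max t' s') ∈ Icc (0:ℝ) 1 := hMY.range _ _ _ hR.le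
        have h1 : star (MX x' x'' s') (MX x' (a i) t') ≤ MX x'' (a i) (max t' s') := by
          rw [hMX.km3 x' x'' s']
          have := hMX.na x'' x' (a i) s' t' hs' ht'
          rwa [max_comm s' t'] at this
        have h2 : MY (b i) y t' ≤ MY (b i) y (max t' s') := htmY _ _ _ _ ht' ht'R
        exact keyC ⟨MX x' (a i) t', m1⟩ ⟨MY (b i) y t', m2⟩ ⟨MX x' x'' s', m3⟩
          ⟨MX x'' (a i) (max t' s'), m4⟩ ⟨MY (b i) y (max t' s'), m5⟩ h1 h2
    -- RLR
    · show star (cross x' y t') (cross x' y'' s') ≤ MY y y'' (max t' s')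
      rcases hcross_cases x' y t' ht' with hD1 | ⟨hts1, hT1⟩
      · rw [hD1]
        calc star (Dv t') (cross x' y'' s')
            ≤ Dv t' := star_le_fst hs (hDmem t' ht') (hcrossmem _ _ _ hs'.le)
          _ ≤ C t' := hDleC t' ht'
          _ ≤ C (max t' s') := hCmono ht' hR ht'R
          _ ≤ MY y y'' (max t' s') := hdY _ hR y y''
      rcases hcross_cases x' y'' s' hs' with hD2 | ⟨hts2, hT2⟩
      · rw [hD2]
        calc star (cross x' y t') (Dv s')
            ≤ Dv s' := star_le_snd hs (hcrossmem _ _ _ ht'.le) (hDmem s' hs')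
          _ ≤ C s' := hDleC s' hs'
          _ ≤ C (max t' s') := hCmono hs' hR hs'R
          _ ≤ MY y y'' (max t' s') := hdY _ hR y y''
      · rw [hT1, hT2]
        obtain ⟨i, hi⟩ := hTexists x' y t'
        obtain ⟨j, hj⟩ := hTexists x' y'' s'
        rw [hi, hj]
        have htR : t₀ < max t' s' := lt_of_lt_of_le hts1 ht'R
        have m1 : MX x' (a i) t' ∈ Icc (0:ℝ) 1 := hMX.range _ _ _ ht'.le
        have m2 : MY (b i) y t' ∈ Icc (0:ℝ) 1 := hMY.range _ _ _ ht'.le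
        have m3 : MX x' (a j) s' ∈ Icc (0:ℝ) 1 := hMX.range _ _ _ hs'.le
        have m4 : MY (b j) y'' s' ∈ Icc (0:ℝ) 1 := hMY.range _ _ _ hs'.le
        have m5 : MX (a i) (a j) (max t' s') ∈ Icc (0:ℝ) 1 := hMX.range _ _ _ hR.le
        have m6 : MY (b i) (b j) (max t' s') ∈ Icc (0:ℝ) 1 := hMY.range _ _ _ hR.le
        have m7 : MY y (b i) (max t' s') ∈ Icc (0:ℝ) 1 := hMY.range _ _ _ hR.le
        have m8 : MY y (b j) (max t' s') ∈ Icc (0:ℝ) 1 := hMY.range _ _ _ hR.le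
        have m9 : MY (b j) y'' (max t' s') ∈ Icc (0:ℝ) 1 := hMY.range _ _ _ hR.le
        have m10 : MY y y'' (max t' s') ∈ Icc (0:ℝ) 1 := hMY.range _ _ _ hR.le
        have h1 : star (MX x' (a i) t') (MX x' (a j) s') ≤ MX (a i) (a j) (max t' s') := by
          rw [hMX.km3 x' (a i) t']
          exact hMX.na (a i) x' (a j) t' s' ht' hs'
        have h2 : star (MX (a i) (a j) (max t' s')) (1 - η) ≤ MY (b i) (b j) (max t' s') :=
          hYX _ htR i j
        have h3 : MY (b i) y t' ≤ MY y (b i) (max t' s') := by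
          rw [hMY.km3]
          exact htmY _ _ _ _ ht' ht'R
        have h4 : star (MY y (b i) (max t' s')) (MY (b i) (b j) (max t' s'))
            ≤ MY y (b j) (max t' s') := by
          have := hMY.na y (b i) (b j) (max t' s') (max t' s') hR hR
          rwa [max_self] at this
        have h5 : MY (b j) y'' s' ≤ MY (b j) y'' (max t' s') := htmY _ _ _ _ hs' hs'R
        have h6 : star (MY y (b j) (max t' s')) (MY (b j) y'' (max t' s'))
            ≤ MY y y'' (max t' s') := by
          have := hMY.na y (b j) y'' (max t' s') (max t' s') hR hR
          rwa [max_self] at this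
        -- note the middle element is on the X side : h3 plays the role of B1 ≤ B1'
        refine keyF ⟨MX x' (a i) t', m1⟩ ⟨MY (b i) y t', m2⟩ ⟨MX x' (a j) s', m3⟩
          ⟨MY (b j) y'' s', m4⟩ ⟨MX (a i) (a j) (max t' s'), m5⟩
          ⟨MY (b i) (b j) (max t' s'), m6⟩ ⟨MY y (b i) (max t' s'), m7⟩
          ⟨MY y (b j) (max t' s'), m8⟩ ⟨MY (b j) y'' (max t' s'), m9⟩
          ⟨MY y y'' (max t' s'), m10⟩ h1 h2 h3 ?_ h5 h6
        exact h4
    -- RRL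
    · show star (MY y y' t') (cross x'' y' s') ≤ cross x'' y (max t' s')
      rcases hcross_cases x'' y' s' hs' with hD | ⟨hts, hT⟩
      · rw [hD]
        calc star (MY y y' t') (Dv s')
            ≤ Dv s' := star_le_snd hs (hMY.range _ _ _ ht'.le) (hDmem s' hs')
          _ ≤ Dv (max t' s') := hDmono s' _ hs' hs'R
          _ ≤ cross x'' y (max t' s') := hD_le_cross _ _ _ hR
      · rw [hT]
        obtain ⟨i, hi⟩ := hTexists x'' y' s'
        rw [hi]
        refine le_trans ?_ (le_trans (hterm_le_T x'' y (max t' s') i)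
          (hT_le_cross x'' y (max t' s') (lt_of_lt_of_le hts hs'R)))
        have m1 : MY y y' t' ∈ Icc (0:ℝ) 1 := hMY.range _ _ _ ht'.le
        have m2 : MX x'' (a i) s' ∈ Icc (0:ℝ) 1 := hMX.range _ _ _ hs'.le
        have m3 : MY (b i) y' s' ∈ Icc (0:ℝ) 1 := hMY.range _ _ _ hs'.le
        have m4 : MX x'' (a i) (max t' s') ∈ Icc (0:ℝ) 1 := hMX.range _ _ _ hR.le
        have m5 : MY (b i) y (max t' s') ∈ Icc (0:ℝ) 1 := hMY.range _ _ _ hR.le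
        have h1 : MX x'' (a i) s' ≤ MX x'' (a i) (max t' s') := htmX _ _ _ _ hs' hs'R
        have h2 : star (MY (b i) y' s') (MY y y' t') ≤ MY (b i) y (max t' s') := by
          rw [hMY.km3 y y' t']
          have := hMY.na (b i) y' y s' t' hs' ht'
          rwa [max_comm s' t'] at this
        exact keyD ⟨MY y y' t', m1⟩ ⟨MX x'' (a i) s', m2⟩ ⟨MY (b i) y' s', m3⟩
          ⟨MX x'' (a i) (max t' s'), m4⟩ ⟨MY (b i) y (max t' s'), m5⟩ h1 h2
    -- RRR
    · exact hMY.na y y' y'' t' s' ht' hs' 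
  have hNA : IsNAFuzzyMetric star G := by
    constructor
    case na => exact hna
    case range =>
      rintro (x | y) (x' | y') r hr
      · exact hMX.range x x' r hr
      · exact hcrossmem x y' r hr
      · exact hcrossmem x' y r hr
      · exact hMY.range y y' r hr
    case km1 =>
      rintro (x | y) (x' | y')
      · exact hMX.km1 x x'
      · show cross x y' 0 = 0
        rw [hcrossdef, glueCross, if_neg (lt_irrefl 0)]
      · show cross x' y 0 = 0
        rw [hcrossdef, glueCross, if_neg (lt_irrefl 0)]
      · exact hMY.km1 y y'
    case km2 =>
      rintro (x | y) (x' | y')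
      · rw [show (Sum.inl x = Sum.inl x' : Prop) ↔ x = x' from Sum.inl.injEq x x' ▸ Iff.rfl]
        exact hMX.km2 x x'
      · constructor
        · intro h
          exfalso
          have h1 := h (t₀ + 1) (by linarith)
          have h2 := hcross_le x y' (t₀ + 1) (by linarith)
          rw [show G (Sum.inl x) (Sum.inr y') (t₀+1) = cross x y' (t₀+1) from rfl] at h1
          rw [h1] at h2; linarith
        · intro h; exact absurd h (by simp)
      · constructor
        · intro h
          exfalso
          have h1 := h (t₀ + 1) (by linarith)
          have h2 := hcross_le x' y (t₀ + 1) (by linarith)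
          rw [show G (Sum.inr y) (Sum.inl x') (t₀+1) = cross x' y (t₀+1) from rfl] at h1
          rw [h1] at h2; linarith
        · intro h; exact absurd h (by simp)
      · rw [show (Sum.inr y = Sum.inr y' : Prop) ↔ y = y' from Sum.inr.injEq y y' ▸ Iff.rfl]
        exact hMY.km2 y y'
    case km3 =>
      rintro (x | y) (x' | y') r
      · exact hMX.km3 x x' r
      · rfl
      · rfl
      · exact hMY.km3 y y' r
    case km5 =>
      rintro (x | y) (x' | y') t' ht'
      · exact hMX.km5 x x' t' ht'
      · exact hcross_cwa x y' t' ht'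
      · exact hcross_cwa x' y t' ht'
      · exact hMY.km5 y y' t' ht' 
  -- admissibility
  have hAdm : IsAdmissible star MX MY G :=
    ⟨hNA, fun _ _ _ _ => rfl, fun _ _ _ _ => rfl⟩
  -- the Hausdorff fuzzy distance of the glued metric
  have hV : star (1 - η) (1 - η) ≤ fuzzyH G t := by
    have htpos : (0:ℝ) < t := lt_trans ht₀ htt
    rw [fuzzyH]
    refine le_min ?_ ?_
    · refine le_ciInf (fun x => ?_)
      obtain ⟨i, hi⟩ := hnetX x
      have hMXt : 1 - η ≤ MX x (a i) t :=
        le_of_lt (lt_of_lt_of_le hi (htmX x (a i) t₀ t ht₀ htt.le))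
      have h1 : star (1 - η) (1 - η) ≤ cross x (b i) t := by
        have e1 : MY (b i) (b i) t = 1 := (hMY.km2 (b i) (b i)).mpr rfl t htpos
        have e2 : star (star (MX x (a i) t) (1 - η)) (MY (b i) (b i) t)
            = star (MX x (a i) t) (1 - η) := by
          rw [e1]; exact hs.one _ (star_mem hs (hMX.range _ _ t htpos.le) huI)
        calc star (1 - η) (1 - η) ≤ star (MX x (a i) t) (1 - η) :=
              hs.mono _ _ _ _ huI huI (hMX.range _ _ t htpos.le) huI hMXt le_rfl
          _ = _ := e2.symm
          _ ≤ T x (b i) t := hterm_le_T x (b i) t i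
          _ ≤ cross x (b i) t := hT_le_cross x (b i) t htt
      have hbdd : BddAbove (Set.range (fun y : Y => G (Sum.inl x) (Sum.inr y) t)) :=
        ⟨1, by rintro v ⟨y, rfl⟩; exact (hcrossmem x y t htpos.le).2⟩
      exact le_trans h1 (le_trans
        (show cross x (b i) t ≤ G (Sum.inl x) (Sum.inr (b i)) t from le_of_eq rfl)
        (le_ciSup hbdd (b i)))
    · refine le_ciInf (fun y => ?_)
      obtain ⟨i, hi⟩ := hnetY y
      have h0 : 1 - η < MY (b i) y t₀ := by rw [hMY.km3]; exact hi
      have hMYt : 1 - η ≤ MY (b i) y t :=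
        le_of_lt (lt_of_lt_of_le h0 (htmY (b i) y t₀ t ht₀ htt.le))
      have h1 : star (1 - η) (1 - η) ≤ cross (a i) y t := by
        have e1 : MX (a i) (a i) t = 1 := (hMX.km2 (a i) (a i)).mpr rfl t htpos
        have e2 : star (star (MX (a i) (a i) t) (1 - η)) (MY (b i) y t)
            = star (1 - η) (MY (b i) y t) := by
          rw [e1, one_star hs huI]
        calc star (1 - η) (1 - η) ≤ star (1 - η) (MY (b i) y t) :=
              hs.mono _ _ _ _ huI huI huI (hMY.range _ _ t htpos.le) le_rfl hMYt
          _ = _ := e2.symm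
          _ ≤ T (a i) y t := hterm_le_T (a i) y t i
          _ ≤ cross (a i) y t := hT_le_cross (a i) y t htt
      have hbdd : BddAbove (Set.range (fun x : X => G (Sum.inl x) (Sum.inr y) t)) :=
        ⟨1, by rintro v ⟨x, rfl⟩; exact (hcrossmem x y t htpos.le).2⟩
      exact le_trans h1 (le_trans
        (show cross (a i) y t ≤ G (Sum.inl (a i)) (Sum.inr y) t from le_of_eq rfl)
        (le_ciSup hbdd (a i)))
  refine le_trans hV (le_csSup ?_ ⟨G, hAdm, rfl⟩)
  -- bounded above by 1
  refine ⟨1, ?_⟩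
  rintro v ⟨M', hM', rfl⟩
  obtain ⟨x₀⟩ := (inferInstance : Nonempty X)
  have ht' : (0:ℝ) < t := lt_trans ht₀ htt
  have hbb : BddBelow (Set.range (fun x : X => ⨆ y : Y, M' (Sum.inl x) (Sum.inr y) t)) := by
    refine ⟨0, ?_⟩
    rintro v ⟨x, rfl⟩
    exact Real.iSup_nonneg (fun y => (hM'.1.range _ _ t ht'.le).1)
  calc fuzzyH M' t ≤ ⨅ x : X, ⨆ y : Y, M' (Sum.inl x) (Sum.inr y) t := min_le_left _ _
    _ ≤ ⨆ y : Y, M' (Sum.inl x₀) (Sum.inr y) t := ciInf_le hbb x₀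
    _ ≤ 1 := Real.iSup_le (fun y => (hM'.1.range _ _ t ht'.le).2) (by norm_num)

end FuzzyGlue

/-- Theorem `th:main1`: a sequence of nonempty compact non-Archimedean
fuzzy metric spaces satisfying (1)-(4) admits, for every `t > 0` and `0 < ε < 1`, a
subsequence whose members are pairwise at fuzzy Gromov-Hausdorff distance
`> (1-ε) ∗ (1-ε)` at time `t`. -/
theorem fuzzy_precompactness_general (star : ℝ → ℝ → ℝ) (hstar : IsContinuousTNorm star)
    (X : ℕ → Type u) [∀ n, TopologicalSpace (X n)] [∀ n, CompactSpace (X n)]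
    [∀ n, Nonempty (X n)]
    (M : ∀ n, X n → X n → ℝ → ℝ)
    (hM : ∀ n, IsNAFuzzyMetric star (M n)) (hcomp : ∀ n, FuzzyCompatible (M n))
    -- (1) the t-norm satisfies (TN1)
    (htn1 : TN1 star)
    -- (2) a nondecreasing left-continuous lower bound for all the `s`-diameters
    (C : ℝ → ℝ) (hCmono : MonotoneOn C (Ioi 0))
    (hClc : ∀ s, 0 < s → ContinuousWithinAt C (Iio s) s)
    (hC : ∀ s, 0 < s → 0 < C s ∧ C s ≤ 1 ∧ ∀ n, C s ≤ fuzzyDiam (M n) s)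
    -- (3) a uniform bound on the cover numbers
    (N : ℝ → ℝ → ℕ)
    (hcov : ∀ ε t : ℝ, 0 < t → 0 < ε → ε < 1 → ∀ n, CovLE (M n) ε t (N ε t))
    -- (4) compatible `(t,ε)`-nets
    (hnets : ∀ t ε : ℝ, 0 < t → 0 < ε → ε < 1 →
      ∃ x : ∀ n, Fin (N ε t) → X n,
        (∀ n, ∀ p : X n, ∃ i, 1 - ε < M n p (x n i) t) ∧
        (∀ n m, ∀ s, t < s → ∀ i j,
          M n (x n i) (x n j) s < M m (x m i) (x m j) s →
          M n (x n i) (x n j) t / star (M m (x m i) (x m j) t) (1 - ε) ≤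
            M n (x n i) (x n j) s / star (M m (x m i) (x m j) s) (1 - ε))) :
    ∀ t ε : ℝ, 0 < t → 0 < ε → ε < 1 →
      ∃ φ : ℕ → ℕ, StrictMono φ ∧
        ∀ j k, star (1 - ε) (1 - ε) < MGH star (M (φ j)) (M (φ k)) t := by
  intro t ε ht hε hε1
  have ht₀ : (0:ℝ) < t/2 := by linarith
  have htt : t/2 < t := by linarith
  obtain ⟨hγ0, hγ1, hγd⟩ := hC (t/2) ht₀
  -- choose η
  obtain ⟨η, hη0, hη1, hηγ, hηpos, hηε⟩ := TNormAux.exists_eta hstar hγ0 hγ1 hε hε1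
  obtain ⟨η₂, hη₂0, hη₂⟩ := TNormAux.uniform_gap hstar htn1 hγ0 hγ1 hη0 hη1
  obtain ⟨x, hnet1, hnet2⟩ := hnets (t/2) η ht₀ hη0 hη1
  haveI hKne : Nonempty (Fin (N η (t/2))) := by
    obtain ⟨i, -⟩ := hnet1 0 (Classical.arbitrary (X 0))
    exact ⟨i⟩
  have huI : (1:ℝ) - η ∈ Icc (0:ℝ) 1 := ⟨by linarith, by linarith⟩
  have hγI : C (t/2) ∈ Icc (0:ℝ) 1 := ⟨hγ0.le, hγ1⟩
  -- diameter lower bound at the net points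
  have hdiam : ∀ (p : ℕ) (i i' : Fin (N η (t/2))) (r : ℝ), 0 < r →
      C r ≤ M p (x p i) (x p i') r := by
    intro p i i' r hr
    refine le_trans ((hC r hr).2.2 p) ?_
    have hbdd : BddBelow (Set.range (fun q : X p × X p => M p q.1 q.2 r)) :=
      ⟨0, by rintro v ⟨q, rfl⟩; exact ((hM p).range q.1 q.2 r hr.le).1⟩
    exact ciInf_le hbdd (x p i, x p i')
  -- the sequence of matrices at time t/2
  set u : ℕ → (Fin (N η (t/2)) × Fin (N η (t/2))) → ℝ :=
    fun n ij => M n (x n ij.1) (x n ij.2) (t/2) with hu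
  have humem : ∀ n, u n ∈ Set.univ.pi
      (fun _ : Fin (N η (t/2)) × Fin (N η (t/2)) => Icc (0:ℝ) 1) := by
    intro n ij _
    exact (hM n).range _ _ _ ht₀.le
  have hcompact : IsCompact (Set.univ.pi
      (fun _ : Fin (N η (t/2)) × Fin (N η (t/2)) => Icc (0:ℝ) 1)) :=
    isCompact_univ_pi (fun _ => isCompact_Icc)
  obtain ⟨L, -, φ₀, hφ₀, htend⟩ := hcompact.tendsto_subseq humem
  obtain ⟨Kd, hKd⟩ := Metric.tendsto_atTop.mp htend (η₂/2) (by linarith)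
  have hmono2 : StrictMono (fun k => k + Kd) := fun p q hpq => by
    simpa using Nat.add_lt_add_right hpq Kd
  refine ⟨fun k => φ₀ (k + Kd), hφ₀.comp hmono2, ?_⟩
  intro j k
  -- pairwise closeness of the matrices at time t/2
  have hclose : ∀ (j' k' : ℕ) (i i' : Fin (N η (t/2))),
      |u (φ₀ (j' + Kd)) (i, i') - u (φ₀ (k' + Kd)) (i, i')| < η₂ := by
    intro j' k' i i'
    have h1 : dist ((u ∘ φ₀) (j' + Kd)) L < η₂/2 := hKd (j' + Kd) (by omega)
    have h2 : dist ((u ∘ φ₀) (k' + Kd)) L < η₂/2 := hKd (k' + Kd) (by omega)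
    have h1' : dist (u (φ₀ (j' + Kd)) (i, i')) (L (i, i')) < η₂/2 :=
      lt_of_le_of_lt (dist_le_pi_dist _ _ _) h1
    have h2' : dist (u (φ₀ (k' + Kd)) (i, i')) (L (i, i')) < η₂/2 :=
      lt_of_le_of_lt (dist_le_pi_dist _ _ _) h2
    have h3 := dist_triangle (u (φ₀ (j' + Kd)) (i, i')) (L (i, i'))
      (u (φ₀ (k' + Kd)) (i, i'))
    rw [dist_comm (L (i,i'))] at h3
    have := lt_of_le_of_lt h3 (by linarith : dist (u (φ₀ (j' + Kd)) (i, i')) (L (i, i'))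
      + dist (u (φ₀ (k' + Kd)) (i, i')) (L (i, i')) < η₂)
    rwa [Real.dist_eq] at this
  -- the transfer of the net comparison to all times `s > t/2`
  have htrans : ∀ (n m : ℕ),
      (∀ i i', |u n (i, i') - u m (i, i')| < η₂) →
      ∀ s, t/2 < s → ∀ (i i' : Fin (N η (t/2))),
      star (M m (x m i) (x m i') s) (1 - η) ≤ M n (x n i) (x n i') s := by
    intro n m hcl s hsgt i i'
    have hspos : (0:ℝ) < s := lt_trans ht₀ hsgt
    have hBI : M m (x m i) (x m i') s ∈ Icc (0:ℝ) 1 := (hM m).range _ _ _ hspos.le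
    have hAI : M n (x n i) (x n i') s ∈ Icc (0:ℝ) 1 := (hM n).range _ _ _ hspos.le
    by_cases hlt : M n (x n i) (x n i') s < M m (x m i) (x m i') s
    · have hr := hnet2 n m s hsgt i i' hlt
      have hB₀I : M m (x m i) (x m i') (t/2) ∈ Icc (0:ℝ) 1 := (hM m).range _ _ _ ht₀.le
      have hb₀γ : C (t/2) ≤ M m (x m i) (x m i') (t/2) := hdiam m i i' (t/2) ht₀
      have hgap : star (M m (x m i) (x m i') (t/2)) (1 - η)
          ≤ M m (x m i) (x m i') (t/2) - η₂ := hη₂ _ ⟨hb₀γ, hB₀I.2⟩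
      have hden0 : 0 < star (M m (x m i) (x m i') (t/2)) (1 - η) :=
        lt_of_lt_of_le hηpos
          (hstar.mono _ _ _ _ hγI huI hB₀I huI hb₀γ le_rfl)
      have hA₀ : M m (x m i) (x m i') (t/2) - η₂ < M n (x n i) (x n i') (t/2) := by
        have := hcl i i'
        rw [hu] at this
        simp only [abs_lt] at this
        linarith [this.1]
      have h1 : 1 ≤ M n (x n i) (x n i') (t/2)
          / star (M m (x m i) (x m i') (t/2)) (1 - η) :=
        (one_le_div hden0).mpr (le_trans hgap hA₀.le)
      have h2 : (1:ℝ) ≤ M n (x n i) (x n i') s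
          / star (M m (x m i) (x m i') s) (1 - η) := le_trans h1 hr
      rcases le_or_gt (star (M m (x m i) (x m i') s) (1 - η)) 0 with h3 | h3
      · exact le_trans h3 hAI.1
      · exact (one_le_div h3).mp h2
    · push_neg at hlt
      exact le_trans (TNormAux.star_le_fst hstar hBI huI) hlt
  -- apply the glued-metric lower bound to the pair (φ j, φ k)
  have hmain := FuzzyGlue.glue_mgh_lower star hstar
    (M (φ₀ (j + Kd))) (M (φ₀ (k + Kd))) (hM _) (hM _) C hCmono hClc
    (fun s hs => (hC s hs).1) (fun s hs => (hC s hs).2.1)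
    (fun s hs => (hC s hs).2.2 _) (fun s hs => (hC s hs).2.2 _)
    (t/2) η t ht₀ htt hη0 hη1
    (x (φ₀ (j + Kd))) (x (φ₀ (k + Kd)))
    (hnet1 _) (hnet1 _)
    (fun s hsgt i i' => htrans _ _ (hclose j k) s hsgt i i')
    (fun s hsgt i i' => htrans _ _ (hclose k j) s hsgt i i')
  exact lt_of_lt_of_le hηε hmain
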